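/- Let E be differentiable with dE/dτ = G(τ) − (ρ/ν₀)(E − v_d·V(τ)), where |G(τ)| ≤ ρ, |V(τ) − v_d| ≤ ν₀ for all τ ≥ T for some T, ρ > 0, ν₀ > 0, v_d ∈ [0,1], and E(τ) ∈ [0,1]. Then limsup_{τ→∞} |E(τ) − v_d²| ≤ ν₀(v_d + 1). -/

import Mathlib

theorem stmt12 (E V G : ℝ → ℝ) (ρ ν₀ vd T : ℝ)
    (hρ : 0 < ρ) (hν₀ : 0 < ν₀) (hvd : vd ∈ Set.Icc (0:ℝ) 1)
    (hode : ∀ τ, HasDerivAt E (G τ - (ρ / ν₀) * (E τ - vd * V τ)) τ)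
    (hG : ∀ τ, |G τ| ≤ ρ)
    (hVnear : ∀ τ ≥ T, |V τ - vd| ≤ ν₀)
    (hEbd : ∀ τ, E τ ∈ Set.Icc (0:ℝ) 1) :
    Filter.limsup (fun τ => |E τ - vd ^ 2|) Filter.atTop ≤ ν₀ * (vd + 1) := by
  obtain ⟨hvd0, hvd1⟩ := hvd
  set lam := ρ / ν₀ with hlam
  have hlam0 : 0 < lam := div_pos hρ hν₀
  set M := ν₀ * (vd + 1) with hM
  have hM0 : 0 < M := by positivity
  have hlamν : lam * ν₀ = ρ := by rw [hlam]; exact div_mul_cancel₀ ρ hν₀.ne'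
  have hlamM : lam * M = ρ * (vd + 1) := by
    rw [hM, ← mul_assoc, hlamν]
  set u : ℝ → ℝ := fun τ => Real.exp (lam * τ) * (E τ - vd ^ 2) with hu
  have hexp' : ∀ τ : ℝ, HasDerivAt (fun s => Real.exp (lam * s)) (lam * Real.exp (lam * τ)) τ := by
    intro τ
    simpa [mul_comm] using ((hasDerivAt_id τ).const_mul lam).exp
  have hu' : ∀ τ, HasDerivAt u (Real.exp (lam * τ) * (G τ + lam * vd * (V τ - vd))) τ := by
    intro τ
    have h2 : HasDerivAt (fun s => E s - vd ^ 2) (G τ - lam * (E τ - vd * V τ)) τ :=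
      (hode τ).sub_const _
    have := (hexp' τ).mul h2
    exact this.congr_deriv (by ring)
  -- bound on H for s ≥ T
  have hH : ∀ s ≥ T, |G s + lam * vd * (V s - vd)| ≤ lam * M := by
    intro s hs
    calc |G s + lam * vd * (V s - vd)| ≤ |G s| + |lam * vd * (V s - vd)| := abs_add_le _ _
      _ ≤ ρ + lam * vd * ν₀ := by
          refine add_le_add (hG s) ?_
          rw [abs_mul, abs_of_nonneg (by positivity : (0:ℝ) ≤ lam * vd)]
          exact mul_le_mul_of_nonneg_left (hVnear s hs) (by positivity)
      _ = lam * M := by rw [hlamM, hlam]; field_simp; ring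
  -- w₁ and w₂ monotone on Ici T
  have key : ∀ (σ : ℝ), σ = 1 ∨ σ = -1 →
      MonotoneOn (fun s => M * Real.exp (lam * s) + σ * u s) (Set.Ici T) := by
    intro σ hσ
    have hderiv : ∀ s, HasDerivAt (fun s => M * Real.exp (lam * s) + σ * u s)
        (M * (lam * Real.exp (lam * s)) + σ * (Real.exp (lam * s) * (G s + lam * vd * (V s - vd)))) s := by
      intro s
      exact ((hexp' s).const_mul M).add ((hu' s).const_mul σ)
    apply monotoneOn_of_deriv_nonneg (convex_Ici T)
    · exact fun s _ => ((hderiv s).differentiableAt).continuousAt.continuousWithinAt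
    · exact fun s _ => ((hderiv s).differentiableAt).differentiableWithinAt
    · intro s hs
      rw [interior_Ici] at hs
      rw [(hderiv s).deriv]
      have hb := hH s (le_of_lt hs)
      have he : (0:ℝ) < Real.exp (lam * s) := Real.exp_pos _
      have h1 : |σ * (G s + lam * vd * (V s - vd))| ≤ lam * M := by
        rcases hσ with h | h <;> subst h
        · simpa using hb
        · rw [neg_one_mul, abs_neg]; exact hb
      nlinarith [neg_abs_le (σ * (G s + lam * vd * (V s - vd))),
        le_abs_self (σ * (G s + lam * vd * (V s - vd)))]
  have hFT : |E T - vd ^ 2| ≤ 1 := by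
    obtain ⟨hE0, hE1⟩ := hEbd T
    have : vd ^ 2 ≤ 1 := by nlinarith
    have : 0 ≤ vd ^ 2 := by positivity
    rw [abs_sub_le_iff]; constructor <;> linarith [hEbd T |>.1, hEbd T |>.2]
  -- pointwise bound
  have hbd : ∀ τ ≥ T, |E τ - vd ^ 2| ≤ M + Real.exp (lam * (T - τ)) := by
    intro τ hτ
    have h1 := key 1 (Or.inl rfl) (Set.self_mem_Ici) (hτ) hτ
    have h2 := key (-1) (Or.inr rfl) (Set.self_mem_Ici) (hτ) hτ
    simp only [one_mul, neg_one_mul] at h1 h2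
    -- |u τ - u T| ≤ M (e^{lam τ} - e^{lam T})
    have huT : |u T| ≤ Real.exp (lam * T) := by
      rw [hu]
      simp only [abs_mul, Real.abs_exp]
      nlinarith [Real.exp_pos (lam * T), hFT]
    have habs : |u τ| ≤ Real.exp (lam * T) + M * Real.exp (lam * τ) := by
      rw [abs_le]
      constructor
      · nlinarith [abs_le.mp huT, Real.exp_pos (lam * T)]
      · nlinarith [abs_le.mp huT, Real.exp_pos (lam * T)]
    have hE : |E τ - vd ^ 2| = Real.exp (-(lam * τ)) * |u τ| := by
      rw [hu]
      simp only [abs_mul, Real.abs_exp, ← mul_assoc, ← Real.exp_add]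
      simp
    rw [hE]
    have he : (0:ℝ) < Real.exp (-(lam * τ)) := Real.exp_pos _
    calc Real.exp (-(lam * τ)) * |u τ|
        ≤ Real.exp (-(lam * τ)) * (Real.exp (lam * T) + M * Real.exp (lam * τ)) := by
          exact mul_le_mul_of_nonneg_left habs he.le
      _ = M + Real.exp (lam * (T - τ)) := by
          have hone : Real.exp (-(lam * τ)) * Real.exp (lam * τ) = 1 := by
            rw [← Real.exp_add]; simp
          have htwo : Real.exp (-(lam * τ)) * Real.exp (lam * T) = Real.exp (lam * (T - τ)) := by
            rw [← Real.exp_add]; congr 1; ring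
          rw [mul_add]
          linear_combination htwo + M * hone
  -- limsup step
  have hB : Filter.Tendsto (fun τ => M + Real.exp (lam * (T - τ))) Filter.atTop (nhds M) := by
    have : Filter.Tendsto (fun τ : ℝ => lam * (T - τ)) Filter.atTop Filter.atBot := by
      apply Filter.Tendsto.const_mul_atBot hlam0
      exact (Filter.tendsto_atBot_add_const_left Filter.atTop T
        Filter.tendsto_neg_atTop_atBot).congr (fun τ => by ring)
    have h2 := Real.tendsto_exp_atBot.comp this
    simpa using (tendsto_const_nhds.add h2)
  have hle : ∀ᶠ τ in Filter.atTop, |E τ - vd ^ 2| ≤ M + Real.exp (lam * (T - τ)) :=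
    Filter.eventually_atTop.mpr ⟨T, hbd⟩
  calc Filter.limsup (fun τ => |E τ - vd ^ 2|) Filter.atTop
      ≤ Filter.limsup (fun τ => M + Real.exp (lam * (T - τ))) Filter.atTop := by
        have hcb : Filter.IsCoboundedUnder (· ≤ ·) Filter.atTop (fun τ => |E τ - vd ^ 2|) :=
          Filter.IsBoundedUnder.isCoboundedUnder_le
            (Filter.isBoundedUnder_of ⟨0, fun τ => abs_nonneg _⟩)
        exact Filter.limsup_le_limsup hle hcb hB.isBoundedUnder_le
    _ = M := hB.limsup_eq
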